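/- Let A be an abelian group, B a group, and φ : B → Aut(A) an action, and let G = A ⋊_φ B. Write a^b for the action of b ∈ B on a ∈ A. Suppose the canonical copy of A in G is a characteristic subgroup of G. Then Aut(G) is isomorphic to the semidirect product Der(B, A) ⋊ T, where Der(B, A) is the abelian group of maps δ : B → A satisfying δ(b_1 b_2) = δ(b_1) + δ(b_2)^{b_1}, where T = {(α, β) ∈ Aut(A) × Aut(B) : α(a^b) = α(a)^{β(b)} for all a ∈ A, b ∈ B} with componentwise multiplication, and where (α, β) ∈ T acts on δ ∈ Der(B, A) by δ^{(α,β)} = α ∘ δ ∘ β^{−1}. Explicitly, the pair (δ, (α, β)) corresponds to the automorphism (a, b) ↦ (α(a) + δ(β(b)), β(b)) of G. -/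

import Mathlib

/-- The group of derivations: maps `δ : B → A` satisfying `δ(b₁b₂) = δ(b₁) · (δ(b₂))^(b₁)`,
where the action of `b ∈ B` on the abelian group `A` is written `a^b := φ b a`.  (It is a
subgroup of the group of all maps `B → A` under pointwise multiplication.) -/
def derivSubgroup {A : Type*} [CommGroup A] {B : Type*} [Group B] (φ : B →* MulAut A) :
    Subgroup (B → A) where
  carrier := {δ | ∀ b₁ b₂ : B, δ (b₁ * b₂) = δ b₁ * φ b₁ (δ b₂)}
  one_mem' := by intro b₁ b₂; simp
  mul_mem' := by
    intro δ δ' h h' b₁ b₂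
    simp only [Pi.mul_apply, h b₁ b₂, h' b₁ b₂, map_mul]
    exact mul_mul_mul_comm _ _ _ _
  inv_mem' := by
    intro δ h b₁ b₂
    simp only [Pi.inv_apply, h b₁ b₂, map_inv, mul_inv]

/-- The subgroup `T` of `Aut(A) × Aut(B)` of compatible pairs `(α, β)`, i.e. those with
`α(a^b) = α(a)^(β b)` for all `a ∈ A`, `b ∈ B`. -/
def tSubgroup {A : Type*} [CommGroup A] {B : Type*} [Group B] (φ : B →* MulAut A) :
    Subgroup (MulAut A × MulAut B) where
  carrier := {p | ∀ (a : A) (b : B), p.1 (φ b a) = φ (p.2 b) (p.1 a)}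
  one_mem' := by intro a b; rfl
  mul_mem' := by
    intro x y hx hy a b
    show x.1 (y.1 (φ b a)) = φ (x.2 (y.2 b)) (x.1 (y.1 a))
    rw [hy a b, hx]
  inv_mem' := by
    intro x hx a b
    show x.1.symm (φ b a) = φ (x.2.symm b) (x.1.symm a)
    apply x.1.injective
    rw [MulEquiv.apply_symm_apply, hx, MulEquiv.apply_symm_apply, MulEquiv.apply_symm_apply]

namespace Prop31

open SemidirectProduct

variable {A : Type*} [CommGroup A] {B : Type*} [Group B] (φ : B →* MulAut A)

/-- action of `T` on derivations, as a raw map -/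
def dAct (p : tSubgroup φ) (δ : derivSubgroup φ) : derivSubgroup φ :=
  ⟨fun b => (p : MulAut A × MulAut B).1 ((δ : B → A) (((p : MulAut A × MulAut B).2)⁻¹ b)), by
    intro b₁ b₂
    have hd : ∀ b₁ b₂ : B, (δ : B → A) (b₁ * b₂) = (δ : B → A) b₁ * φ b₁ ((δ : B → A) b₂) := δ.2
    have hp : ∀ (a : A) (b : B), (p : MulAut A × MulAut B).1 (φ b a)
        = φ ((p : MulAut A × MulAut B).2 b) ((p : MulAut A × MulAut B).1 a) := p.2
    simp only [map_mul, hd, hp, map_mul, MulAut.apply_inv_self]⟩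

lemma dAct_apply (p : tSubgroup φ) (δ : derivSubgroup φ) (b : B) :
    ((dAct φ p δ : B → A)) b
      = (p : MulAut A × MulAut B).1 ((δ : B → A) (((p : MulAut A × MulAut B).2)⁻¹ b)) := rfl

def rho : tSubgroup φ →* MulAut (derivSubgroup φ) where
  toFun p :=
    { toFun := dAct φ p
      invFun := dAct φ p⁻¹
      left_inv := by
        intro δ; apply Subtype.ext; funext b
        simp [dAct_apply, MulAut.apply_inv_self, MulAut.inv_apply_self]
      right_inv := by
        intro δ; apply Subtype.ext; funext b
        simp [dAct_apply, MulAut.apply_inv_self, MulAut.inv_apply_self]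
      map_mul' := by
        intro δ δ'; apply Subtype.ext; funext b
        simp [dAct_apply] }
  map_one' := by
    apply MulEquiv.ext; intro δ; apply Subtype.ext; funext b; simp [dAct_apply]
  map_mul' := by
    intro p q
    apply MulEquiv.ext; intro δ; apply Subtype.ext; funext b
    simp [dAct_apply, mul_inv_rev]

def fAut (δ : derivSubgroup φ) (p : tSubgroup φ) : MulAut (A ⋊[φ] B) where
  toFun g := ⟨(p : MulAut A × MulAut B).1 g.left
      * (δ : B → A) ((p : MulAut A × MulAut B).2 g.right),
      (p : MulAut A × MulAut B).2 g.right⟩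
  invFun g := ⟨((p : MulAut A × MulAut B).1)⁻¹ (g.left * ((δ : B → A) g.right)⁻¹),
      ((p : MulAut A × MulAut B).2)⁻¹ g.right⟩
  left_inv := by
    intro g; ext <;> simp
  right_inv := by
    intro g; ext <;> simp
  map_mul' := by
    intro g h
    have hd : ∀ b₁ b₂ : B, (δ : B → A) (b₁ * b₂) = (δ : B → A) b₁ * φ b₁ ((δ : B → A) b₂) := δ.2
    have hp : ∀ (a : A) (b : B), (p : MulAut A × MulAut B).1 (φ b a)
        = φ ((p : MulAut A × MulAut B).2 b) ((p : MulAut A × MulAut B).1 a) := p.2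
    ext
    · simp only [mul_left, mul_right, map_mul, hd, hp]
      simp [mul_assoc, mul_comm, mul_left_comm]
    · simp [mul_right]

lemma fAut_apply (δ : derivSubgroup φ) (p : tSubgroup φ) (g : A ⋊[φ] B) :
    fAut φ δ p g = ⟨(p : MulAut A × MulAut B).1 g.left
      * (δ : B → A) ((p : MulAut A × MulAut B).2 g.right),
      (p : MulAut A × MulAut B).2 g.right⟩ := rfl

def bigHom : (derivSubgroup φ) ⋊[rho φ] (tSubgroup φ) →* MulAut (A ⋊[φ] B) :=
  MonoidHom.mk' (fun x => fAut φ x.left x.right) (by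
    intro x y
    apply MulEquiv.ext; intro g
    ext
    · show ((x * y).right : MulAut A × MulAut B).1 g.left
          * ((x * y).left : B → A) (((x * y).right : MulAut A × MulAut B).2 g.right)
        = (x.right : MulAut A × MulAut B).1 ((fAut φ y.left y.right g).left)
          * (x.left : B → A) ((x.right : MulAut A × MulAut B).2 ((fAut φ y.left y.right g).right))
      rw [SemidirectProduct.mul_left, SemidirectProduct.mul_right]
      simp only [mul_left, mul_right, fAut_apply, Subgroup.coe_mul, Prod.fst_mul, Prod.snd_mul,
        MulAut.mul_apply, Pi.mul_apply, dAct_apply, rho, MonoidHom.coe_mk, OneHom.coe_mk,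
        MulEquiv.coe_mk, Equiv.coe_fn_mk, MulAut.inv_apply_self, map_mul]
      simp [mul_assoc, mul_comm, mul_left_comm]
    · show (((x * y).right : MulAut A × MulAut B).2) g.right
        = (x.right : MulAut A × MulAut B).2 ((fAut φ y.left y.right g).right)
      simp [fAut_apply])

lemma bigHom_apply (x : (derivSubgroup φ) ⋊[rho φ] (tSubgroup φ)) (g : A ⋊[φ] B) :
    bigHom φ x g = fAut φ x.left x.right g := rfl

end Prop31

namespace Prop31

open SemidirectProduct

variable {A : Type*} [CommGroup A] {B : Type*} [Group B] (φ : B →* MulAut A)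

lemma bigHom_injective : Function.Injective (bigHom φ) := by
  rw [injective_iff_map_eq_one]
  intro x hx
  have hx' : ∀ g : A ⋊[φ] B, fAut φ x.left x.right g = g := fun g => by
    have := MulEquiv.ext_iff.mp hx g
    simpa [bigHom_apply] using this
  have hβ : ∀ b : B, (x.right : MulAut A × MulAut B).2 b = b := by
    intro b
    have := congrArg SemidirectProduct.right (hx' (inr b))
    simpa [fAut_apply] using this
  have hδ : ∀ b : B, (x.left : B → A) b = 1 := by
    intro b
    have := congrArg SemidirectProduct.left (hx' (inr b))
    simpa [fAut_apply, hβ] using this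
  have hα : ∀ a : A, (x.right : MulAut A × MulAut B).1 a = a := by
    intro a
    have := congrArg SemidirectProduct.left (hx' (inl a))
    simpa [fAut_apply, hδ] using this
  have h1 : x.left = 1 := Subtype.ext (funext fun b => hδ b)
  have h2 : x.right = 1 := Subtype.ext (Prod.ext (MulEquiv.ext hα) (MulEquiv.ext hβ))
  have : x = ⟨x.left, x.right⟩ := rfl
  rw [this, h1, h2]
  rfl

lemma bigHom_surjective
    (hchar : (SemidirectProduct.inl.range : Subgroup (A ⋊[φ] B)).Characteristic) :
    Function.Surjective (bigHom φ) := by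
  intro e
  have hmem : ∀ (ψ : (A ⋊[φ] B) ≃* (A ⋊[φ] B)) (a : A),
      ψ (inl a) ∈ (inl : A →* A ⋊[φ] B).range := by
    intro ψ a
    have hfix := hchar.fixed ψ
    have h1 : (inl a : A ⋊[φ] B) ∈ (inl : A →* A ⋊[φ] B).range := ⟨a, rfl⟩
    rw [← hfix] at h1
    exact h1
  obtain ⟨α0, he1⟩ : ∃ α0 : A → A, ∀ a, e (inl a) = inl (α0 a) :=
    ⟨fun a => (hmem e a).choose, fun a => ((hmem e a).choose_spec).symm⟩
  obtain ⟨α0', he1'⟩ : ∃ α0' : A → A, ∀ a, e.symm (inl a) = inl (α0' a) :=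
    ⟨fun a => (hmem e.symm a).choose, fun a => ((hmem e.symm a).choose_spec).symm⟩
  obtain ⟨δ0, β0, he2⟩ : ∃ (δ0 : B → A) (β0 : B → B), ∀ b, e (inr b) = ⟨δ0 b, β0 b⟩ :=
    ⟨fun b => (e (inr b)).left, fun b => (e (inr b)).right, fun b => rfl⟩
  obtain ⟨β0', he2'⟩ : ∃ β0' : B → B, ∀ b, (e.symm (inr b)).right = β0' b :=
    ⟨fun b => (e.symm (inr b)).right, fun b => rfl⟩
  have hαli : ∀ a, α0' (α0 a) = a := by
    intro a
    apply inl_injective (φ := φ)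
    rw [← he1', ← he1, MulEquiv.symm_apply_apply]
  have hαri : ∀ a, α0 (α0' a) = a := by
    intro a
    apply inl_injective (φ := φ)
    rw [← he1, ← he1', MulEquiv.apply_symm_apply]
  have hαhom : ∀ a₁ a₂, α0 (a₁ * a₂) = α0 a₁ * α0 a₂ := by
    intro a₁ a₂
    apply inl_injective (φ := φ)
    calc (inl (α0 (a₁ * a₂)) : A ⋊[φ] B) = e (inl (a₁ * a₂)) := (he1 _).symm
      _ = e (inl a₁ * inl a₂) := by rw [← map_mul inl]
      _ = e (inl a₁) * e (inl a₂) := map_mul e _ _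
      _ = inl (α0 a₁) * inl (α0 a₂) := by rw [he1, he1]
      _ = inl (α0 a₁ * α0 a₂) := (map_mul inl _ _).symm
  have hmul2 : ∀ b₁ b₂, e (inr (b₁ * b₂)) = e (inr b₁) * e (inr b₂) := by
    intro b₁ b₂
    rw [← map_mul e, ← map_mul inr]
  have hβhom : ∀ b₁ b₂, β0 (b₁ * b₂) = β0 b₁ * β0 b₂ := by
    intro b₁ b₂
    have h := hmul2 b₁ b₂
    rw [he2, he2, he2] at h
    have := congrArg SemidirectProduct.right h
    simpa [mul_right] using this
  have hderiv0 : ∀ b₁ b₂, δ0 (b₁ * b₂) = δ0 b₁ * φ (β0 b₁) (δ0 b₂) := by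
    intro b₁ b₂
    have h := hmul2 b₁ b₂
    rw [he2, he2, he2] at h
    have := congrArg SemidirectProduct.left h
    simpa [mul_left] using this
  -- key lemma for inverse of β0
  have key : ∀ (f : (A ⋊[φ] B) ≃* (A ⋊[φ] B)),
      (∀ a : A, f.symm (inl a) ∈ (inl : A →* A ⋊[φ] B).range) →
      ∀ b, (f.symm (inr ((f (inr b)).right))).right = b := by
    intro f hf b
    obtain ⟨y, hy⟩ := hf (f (inr b)).left
    have h1 : inl ((f (inr b)).left) * inr ((f (inr b)).right) = f (inr b) :=
      inl_left_mul_inr_right _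
    have h2 : inr ((f (inr b)).right) = (inl ((f (inr b)).left))⁻¹ * f (inr b) :=
      eq_inv_mul_of_mul_eq h1
    rw [h2, map_mul, map_inv, MulEquiv.symm_apply_apply, ← hy]
    simp [mul_right]
  have hβli : ∀ b, β0' (β0 b) = b := by
    intro b
    have := key e (fun a => hmem e.symm a) b
    rw [he2'] at this
    have h2 : (e (inr b)).right = β0 b := by rw [he2]
    rw [h2] at this
    exact this
  have hβri : ∀ b, β0 (β0' b) = b := by
    intro b
    have := key e.symm (fun a => by simpa using hmem e a) b
    rw [he2'] at this
    have h2 : (e (inr (β0' b))).right = β0 (β0' b) := by rw [he2]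
    rw [MulEquiv.symm_symm, h2] at this
    exact this
  have hcompat : ∀ (a : A) (b : B), α0 (φ b a) = φ (β0 b) (α0 a) := by
    intro a b
    have hcomm : (inr b : A ⋊[φ] B) * inl a = inl (φ b a) * inr b := by
      ext <;> simp
    have h3 : e (inr b) * e (inl a) = e (inl (φ b a)) * e (inr b) := by
      rw [← map_mul, ← map_mul, hcomm]
    rw [he1, he1, he2] at h3
    have h4 := congrArg SemidirectProduct.left h3
    simp only [mul_left, left_inl, right_inl, map_one, MulAut.one_apply, mul_one] at h4
    have h4' : δ0 b * φ (β0 b) (α0 a) = δ0 b * α0 (φ b a) := by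
      rw [h4, mul_comm]
    exact (mul_left_cancel h4').symm
  have hβ0inj : Function.Injective β0 := fun x y h => by rw [← hβli x, h, hβli]
  have hβ'hom : ∀ c₁ c₂, β0' (c₁ * c₂) = β0' c₁ * β0' c₂ := by
    intro c₁ c₂
    apply hβ0inj
    rw [hβri, hβhom, hβri, hβri]
  have hdmem : (fun c => δ0 (β0' c)) ∈ derivSubgroup φ := by
    intro c₁ c₂
    simp only [hβ'hom, hderiv0, hβri]
  have hp : ((⟨⟨α0, α0', hαli, hαri⟩, hαhom⟩ : MulAut A), (⟨⟨β0, β0', hβli, hβri⟩, hβhom⟩ : MulAut B))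
      ∈ tSubgroup φ := fun a b => hcompat a b
  refine ⟨⟨⟨fun c => δ0 (β0' c), hdmem⟩, ⟨_, hp⟩⟩, ?_⟩
  apply MulEquiv.ext
  intro g
  obtain ⟨a, b⟩ := g
  have heg : e ⟨a, b⟩ = ⟨α0 a * δ0 b, β0 b⟩ := by
    rw [mk_eq_inl_mul_inr, map_mul, he1, he2]
    ext <;> simp [mul_left, mul_right]
  rw [bigHom_apply, fAut_apply, heg]
  ext
  · show α0 a * δ0 (β0' (β0 b)) = α0 a * δ0 b
    rw [hβli]
  · show β0 b = β0 b
    rfl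

end Prop31

/-- Proposition 3.1.  Let `G = A ⋊_φ B` with `A` abelian, and suppose the canonical copy
of `A` in `G` is characteristic.  Then `Aut(G) ≅ Der(B, A) ⋊ T`, where `(α, β) ∈ T` acts
on a derivation `δ` by `α ∘ δ ∘ β⁻¹`, and the pair `(δ, (α, β))` corresponds to the
automorphism `(a, b) ↦ (α(a) · δ(β(b)), β(b))` of `G`. -/
theorem statement3 {A : Type*} [CommGroup A] {B : Type*} [Group B] (φ : B →* MulAut A)
    (hchar : (SemidirectProduct.inl.range : Subgroup (A ⋊[φ] B)).Characteristic) :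
    ∃ ρ : tSubgroup φ →* MulAut (derivSubgroup φ),
      (∀ (p : tSubgroup φ) (δ : derivSubgroup φ) (b : B),
        ((ρ p δ : B → A) b)
          = (p : MulAut A × MulAut B).1
              ((δ : B → A) (((p : MulAut A × MulAut B).2)⁻¹ b))) ∧
      ∃ F : (derivSubgroup φ) ⋊[ρ] (tSubgroup φ) ≃* MulAut (A ⋊[φ] B),
        ∀ (δ : derivSubgroup φ) (p : tSubgroup φ) (a : A) (b : B),
          F ⟨δ, p⟩ ⟨a, b⟩
            = ⟨(p : MulAut A × MulAut B).1 a
                  * (δ : B → A) ((p : MulAut A × MulAut B).2 b),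
                (p : MulAut A × MulAut B).2 b⟩ := by
  exact ⟨Prop31.rho φ, fun p δ b => rfl,
    MulEquiv.ofBijective (Prop31.bigHom φ)
      ⟨Prop31.bigHom_injective φ, Prop31.bigHom_surjective φ hchar⟩,
    fun δ p a b => rfl⟩
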